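/- Let z : [0, ρ̄] → ℝ be continuous, C¹ on (0, ρ̄), with z(φ) < 0 for φ ∈ (0, ρ̄), z(ρ̄) = 0, satisfying ż(φ) = h(φ) − c − D(φ)g(φ)/z(φ) on (0, ρ̄), with D(φ)g(φ)/(φ − ρ̄) → 0 as φ → ρ̄⁻. If c > h(ρ̄) and z is differentiable from the left at ρ̄, then ż(ρ̄) = 0. -/

import Mathlib

open Set Filter Topology

theorem stmt2 (ρ : ℝ) (hρ : 0 < ρ) (h D g z : ℝ → ℝ) (c m : ℝ)
    (hh : ContinuousOn h (Icc 0 ρ))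
    (hD : ContinuousOn D (Icc 0 ρ)) (hg : ContinuousOn g (Icc 0 ρ))
    (hDpos : ∀ φ ∈ Ioo 0 ρ, 0 < D φ) (hgpos : ∀ φ ∈ Ioo 0 ρ, 0 < g φ)
    (hgρ : g ρ = 0)
    (hz : ContinuousOn z (Icc 0 ρ))
    (hzneg : ∀ φ ∈ Ioo 0 ρ, z φ < 0) (hzρ : z ρ = 0)
    (hode : ∀ φ ∈ Ioo 0 ρ, HasDerivAt z (h φ - c - D φ * g φ / z φ) φ)
    (hlim : Tendsto (fun φ => D φ * g φ / (φ - ρ)) (𝓝[<] ρ) (𝓝 0))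
    (hc : h ρ < c)
    (hdiff : Tendsto (fun φ => (z φ - z ρ) / (φ - ρ)) (𝓝[<] ρ) (𝓝 m)) :
    m = 0 := by
  by_contra hm
  have hIoo : Ioo 0 ρ ∈ 𝓝[<] ρ := Ioo_mem_nhdsLT_of_mem ⟨hρ, le_refl ρ⟩
  have hm0 : 0 ≤ m := by
    refine ge_of_tendsto hdiff ?_
    filter_upwards [hIoo] with x hx
    rw [hzρ, sub_zero]
    exact le_of_lt (div_pos_of_neg_of_neg (hzneg x hx) (sub_neg.mpr hx.2))
  have hmpos : 0 < m := lt_of_le_of_ne hm0 (Ne.symm hm)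
  have hslope : Tendsto (fun φ => z φ / (φ - ρ)) (𝓝[<] ρ) (𝓝 m) :=
    hdiff.congr fun x => by rw [hzρ, sub_zero]
  have hinv : Tendsto (fun φ => (φ - ρ) / z φ) (𝓝[<] ρ) (𝓝 m⁻¹) := by
    have h1 := hslope.inv₀ (ne_of_gt hmpos)
    refine h1.congr ?_
    intro x
    rw [inv_div]
  have hDgz : Tendsto (fun φ => D φ * g φ / z φ) (𝓝[<] ρ) (𝓝 0) := by
    have h1 : Tendsto (fun φ => D φ * g φ / (φ - ρ) * ((φ - ρ) / z φ)) (𝓝[<] ρ)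
        (𝓝 (0 * m⁻¹)) := hlim.mul hinv
    rw [zero_mul] at h1
    refine h1.congr' ?_
    filter_upwards [hIoo] with x hx
    have hx1 : x - ρ ≠ 0 := sub_ne_zero.mpr (ne_of_lt hx.2)
    have hx2 : z x ≠ 0 := ne_of_lt (hzneg x hx)
    field_simp
  have hmem : ρ ∈ Icc 0 ρ := ⟨le_of_lt hρ, le_refl ρ⟩
  have hfilter : 𝓝[<] ρ ≤ 𝓝[Icc 0 ρ] ρ := by
    rw [← nhdsWithin_Ioo_eq_nhdsLT hρ]
    exact nhdsWithin_mono _ Ioo_subset_Icc_self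
  have hhten : Tendsto h (𝓝[<] ρ) (𝓝 (h ρ)) :=
    ((hh ρ hmem).tendsto).mono_left hfilter
  have hderiv : Tendsto (fun φ => h φ - c - D φ * g φ / z φ) (𝓝[<] ρ)
      (𝓝 (h ρ - c)) := by
    have := (hhten.sub_const c).sub hDgz
    simpa using this
  have hzten : Tendsto z (𝓝[<] ρ) (𝓝 0) := by
    have := (hz ρ hmem).tendsto.mono_left hfilter
    rwa [hzρ] at this
  have hsubten : Tendsto (fun φ : ℝ => φ - ρ) (𝓝[<] ρ) (𝓝 0) := by
    have h1 : Tendsto (fun φ : ℝ => φ - ρ) (𝓝 ρ) (𝓝 (ρ - ρ)) :=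
      (continuous_id.sub continuous_const).tendsto ρ
    rw [sub_self] at h1
    exact h1.mono_left nhdsWithin_le_nhds
  have hL : Tendsto (fun φ => z φ / (φ - ρ)) (𝓝[<] ρ) (𝓝 (h ρ - c)) := by
    apply HasDerivAt.lhopital_zero_nhdsLT
      (f' := fun φ => h φ - c - D φ * g φ / z φ) (g' := fun _ => (1 : ℝ))
    · filter_upwards [hIoo] with x hx; exact hode x hx
    · filter_upwards with x
      simpa using (hasDerivAt_id x).sub_const ρ
    · filter_upwards with x; exact one_ne_zero
    · exact hzten
    · exact hsubten
    · simpa using hderiv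
  have : m = h ρ - c := tendsto_nhds_unique hslope hL
  linarith
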